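/- Let H be a Hopf algebra over a field k. Define A' : H → H ⊗ H by A'(h) = Σ h₍₁₎ ⊗ S(h₍₂₎) − ε(h) 1 ⊗ 1. Then A' is a gauge field (A'(h) ∈ ker(m) for all h, and A'(1) = 0) and it has zero curvature: for all h ∈ H, d(A'(h)) + Σ A'(h₍₁₎) ∧ A'(h₍₂₎) = 0 in H ⊗ H ⊗ H. -/

import Mathlib

open TensorProduct

noncomputable section

variable {k H : Type*} [Field k] [Ring H] [HopfAlgebra k H]

/-- The exterior differential on universal 1-forms:
`d(a ⊗ b) = 1 ⊗ a ⊗ b − a ⊗ 1 ⊗ b + a ⊗ b ⊗ 1`. -/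
noncomputable def dOne : H ⊗[k] H →ₗ[k] H ⊗[k] (H ⊗[k] H) :=
  TensorProduct.mk k H (H ⊗[k] H) 1
    - LinearMap.lTensor H (TensorProduct.mk k H H 1)
    + LinearMap.lTensor H ((TensorProduct.mk k H H).flip 1)

/-- The wedge product of universal 1-forms: `(a ⊗ b) ∧ (c ⊗ d) = a ⊗ bc ⊗ d`. -/
noncomputable def wedge :
    (H ⊗[k] H) ⊗[k] (H ⊗[k] H) →ₗ[k] H ⊗[k] (H ⊗[k] H) :=
  LinearMap.lTensor H
      ((LinearMap.mul' k H).rTensor H ∘ₗ (TensorProduct.assoc k H H H).symm.toLinearMap)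
    ∘ₗ (TensorProduct.assoc k H H (H ⊗[k] H)).toLinearMap

/-- The gauge field `A'(h) = Σ h₍₁₎ ⊗ S(h₍₂₎) − ε(h) 1 ⊗ 1`. -/
noncomputable def gaugeA' : H →ₗ[k] H ⊗[k] H :=
  (HopfAlgebra.antipode (R := k) (A := H)).lTensor H ∘ₗ Coalgebra.comul
    - (Coalgebra.counit (R := k) (A := H)).smulRight ((1 : H) ⊗ₜ[k] (1 : H))

set_option maxHeartbeats 1000000
set_option synthInstance.maxHeartbeats 400000

namespace Statement6Aux

local notation "S" => HopfAlgebra.antipode (R := k) (A := H)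
local notation "Δ" => Coalgebra.comul (R := k) (A := H)
local notation "ε" => Coalgebra.counit (R := k) (A := H)

/-- `L h = Σ h₁ ⊗ S h₂`. -/
noncomputable def L : H →ₗ[k] H ⊗[k] H := (S).lTensor H ∘ₗ Δ

/-- `η h = ε h • (1 ⊗ 1)`. -/
noncomputable def η : H →ₗ[k] H ⊗[k] H := (ε).smulRight ((1 : H) ⊗ₜ[k] (1 : H))

lemma gaugeA'_eq : gaugeA' (k := k) (H := H) = L - η := rfl

lemma wedge_apply (a b c d : H) :
    wedge (k := k) ((a ⊗ₜ[k] b) ⊗ₜ[k] (c ⊗ₜ[k] d)) = a ⊗ₜ[k] ((b * c) ⊗ₜ[k] d) := by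
  simp [wedge]

lemma map_sub_sub (f f' : H →ₗ[k] H ⊗[k] H) :
    TensorProduct.map (f - f') (f - f')
      = TensorProduct.map f f - TensorProduct.map f f' - TensorProduct.map f' f
        + TensorProduct.map f' f' := by
  apply TensorProduct.ext'
  intro x y
  simp [TensorProduct.sub_tmul, TensorProduct.tmul_sub]
  abel

/-- `C2 (a ⊗ c) = Σ a₁ ⊗ S(a₂) c`. -/
noncomputable def C2 : H ⊗[k] H →ₗ[k] H ⊗[k] H :=
  LinearMap.lTensor H (LinearMap.mul' k H ∘ₗ (S).rTensor H)
    ∘ₗ (TensorProduct.assoc k H H H).toLinearMap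
    ∘ₗ (Δ).rTensor H

lemma C2_comul (h : H) : C2 (Δ h) = h ⊗ₜ[k] (1 : H) := by
  have h1 : (TensorProduct.assoc k H H H) ((Δ).rTensor H (Δ h))
      = (Δ).lTensor H (Δ h) := Coalgebra.coassoc_apply h
  simp only [C2, LinearMap.comp_apply, LinearEquiv.coe_coe, h1]
  rw [← LinearMap.comp_apply, ← LinearMap.lTensor_comp]
  have h2 : (LinearMap.mul' k H ∘ₗ (S).rTensor H) ∘ₗ Δ
      = Algebra.linearMap k H ∘ₗ ε := by
    rw [LinearMap.comp_assoc]; exact HopfAlgebra.mul_antipode_rTensor_comul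
  rw [h2, LinearMap.lTensor_comp, LinearMap.comp_apply,
    Coalgebra.lTensor_counit_comul]
  simp

/-- The hard identity: `Σ h₁ ⊗ S(h₂)h₃ ⊗ S(h₄) = Σ h₁ ⊗ 1 ⊗ S(h₂)`. -/
lemma wedge_LL (h : H) :
    wedge (TensorProduct.map L L (Δ h))
      = (TensorProduct.mk k H H 1).lTensor H (L (k := k) (H := H) h) := by
  have e1 : TensorProduct.map (L (k := k) (H := H)) L
      = TensorProduct.map ((S).lTensor H) ((S).lTensor H) ∘ₗ TensorProduct.map Δ Δ := by
    rw [← TensorProduct.map_comp]; rfl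
  have e2 : TensorProduct.map (Δ) (Δ) (Δ h)
      = (Δ).rTensor (H ⊗[k] H) ((TensorProduct.assoc k H H H) ((Δ).rTensor H (Δ h))) := by
    rw [Coalgebra.coassoc_apply, ← LinearMap.rTensor_comp_lTensor, LinearMap.comp_apply]
  rw [e1, LinearMap.comp_apply, e2]
  have e3 : ∀ u : (H ⊗[k] H) ⊗[k] H,
      wedge (TensorProduct.map ((S).lTensor H) ((S).lTensor H)
          ((Δ).rTensor (H ⊗[k] H) ((TensorProduct.assoc k H H H) u)))
        = (TensorProduct.assoc k H H H) (TensorProduct.map C2 (S) u) := by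
    intro u
    induction u using TensorProduct.induction_on with
    | zero => simp
    | add x y hx hy => simp only [map_add, hx, hy]
    | tmul x e =>
      induction x using TensorProduct.induction_on with
      | zero => simp [TensorProduct.zero_tmul]
      | add x y hx hy => simp only [TensorProduct.add_tmul, map_add, hx, hy]
      | tmul a c =>
        simp only [TensorProduct.assoc_tmul, LinearMap.rTensor_tmul,
          TensorProduct.map_tmul, LinearMap.lTensor_tmul, C2, LinearMap.comp_apply,
          LinearEquiv.coe_coe]
        generalize Coalgebra.comul (R := k) a = u
        induction u using TensorProduct.induction_on with
        | zero => simp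
        | add x y hx hy => simp only [map_add, TensorProduct.add_tmul, hx, hy]
        | tmul p q =>
          simp [wedge_apply, TensorProduct.assoc_tmul]
  rw [e3]
  have e4 : TensorProduct.map C2 (S) ((Δ).rTensor H (Δ h))
      = TensorProduct.map (C2 ∘ₗ Δ) ((S) ∘ₗ LinearMap.id) (Δ h) := by
    rw [TensorProduct.map_comp, LinearMap.comp_apply]; rfl
  rw [e4]
  have e5 : TensorProduct.map (C2 ∘ₗ Δ) ((S) ∘ₗ LinearMap.id) (Δ h)
      = TensorProduct.map ((TensorProduct.mk k H H).flip 1) (S) (Δ h) := by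
    have : (C2 ∘ₗ Δ : H →ₗ[k] H ⊗[k] H) = (TensorProduct.mk k H H).flip 1 := by
      ext x; exact C2_comul x
    rw [this]; rfl
  rw [e5]
  show _ = (TensorProduct.mk k H H 1).lTensor H (((S).lTensor H) (Δ h))
  generalize Coalgebra.comul (R := k) h = u
  induction u using TensorProduct.induction_on with
  | zero => simp
  | add x y hx hy => simp only [map_add, hx, hy]
  | tmul a b => simp

lemma eta_eq : (η : H →ₗ[k] H ⊗[k] H)
    = LinearMap.toSpanSingleton k (H ⊗[k] H) ((1:H) ⊗ₜ[k] 1) ∘ₗ ε := by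
  ext x; simp [η, LinearMap.toSpanSingleton_apply]

lemma map_L_eta (h : H) :
    TensorProduct.map (L (k := k) (H := H)) η (Δ h) = L h ⊗ₜ[k] ((1:H) ⊗ₜ[k] 1) := by
  rw [← LinearMap.rTensor_comp_lTensor, LinearMap.comp_apply, eta_eq,
    LinearMap.lTensor_comp, LinearMap.comp_apply, Coalgebra.lTensor_counit_comul]
  simp [LinearMap.toSpanSingleton_apply]

lemma map_eta_L (h : H) :
    TensorProduct.map η (L (k := k) (H := H)) (Δ h) = ((1:H) ⊗ₜ[k] 1) ⊗ₜ[k] L h := by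
  rw [← LinearMap.lTensor_comp_rTensor, LinearMap.comp_apply, eta_eq,
    LinearMap.rTensor_comp, LinearMap.comp_apply, Coalgebra.rTensor_counit_comul]
  simp [LinearMap.toSpanSingleton_apply]

lemma map_eta_eta (h : H) :
    TensorProduct.map (η (k := k) (H := H)) η (Δ h)
      = ε h • (((1:H) ⊗ₜ[k] (1:H)) ⊗ₜ[k] ((1:H) ⊗ₜ[k] (1:H))) := by
  have hee : TensorProduct.map (ε) (ε) (Δ h) = (ε h) ⊗ₜ[k] (1:k) := by
    rw [← LinearMap.rTensor_comp_lTensor, LinearMap.comp_apply,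
      Coalgebra.lTensor_counit_comul, LinearMap.rTensor_tmul]
  rw [eta_eq, TensorProduct.map_comp, LinearMap.comp_apply, hee]
  simp [LinearMap.toSpanSingleton_apply, TensorProduct.smul_tmul']

lemma wedge_tmul_one_one (z : H ⊗[k] H) :
    wedge (z ⊗ₜ[k] ((1:H) ⊗ₜ[k] (1:H)))
      = ((TensorProduct.mk k H H).flip 1).lTensor H z := by
  induction z using TensorProduct.induction_on with
  | zero => simp [TensorProduct.zero_tmul]
  | add x y hx hy => simp [TensorProduct.add_tmul, hx, hy]
  | tmul a b => simp [wedge_apply]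

lemma wedge_one_one_tmul (z : H ⊗[k] H) :
    wedge (((1:H) ⊗ₜ[k] (1:H)) ⊗ₜ[k] z) = (1:H) ⊗ₜ[k] z := by
  induction z using TensorProduct.induction_on with
  | zero => simp
  | add x y hx hy => simp [TensorProduct.tmul_add, hx, hy]
  | tmul a b => simp [wedge_apply]

lemma dOne_one_one :
    dOne ((1:H) ⊗ₜ[k] (1:H)) = (1:H) ⊗ₜ[k] ((1:H) ⊗ₜ[k] (1:H)) := by
  simp [dOne]

lemma antipode_one : (S) (1 : H) = 1 := by
  have := HopfAlgebra.mul_antipode_rTensor_comul_apply (R := k) (A := H) 1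
  simpa [Algebra.TensorProduct.one_def, LinearMap.mul'_apply] using this

end Statement6Aux

open Statement6Aux in
/-- `A'(h) = Σ h₍₁₎ ⊗ S(h₍₂₎) − ε(h) 1 ⊗ 1` is a gauge field (`A'(h) ∈ ker m`,
`A'(1) = 0`) with zero curvature: `d(A'(h)) + Σ A'(h₍₁₎) ∧ A'(h₍₂₎) = 0` for all `h`. -/
theorem statement6 :
    (∀ h : H, LinearMap.mul' k H (gaugeA' (k := k) (H := H) h) = 0)
    ∧ gaugeA' (k := k) (H := H) 1 = 0
    ∧ (∀ h : H,
        dOne (gaugeA' (k := k) (H := H) h)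
          + wedge ((TensorProduct.map gaugeA' gaugeA') (Coalgebra.comul (R := k) h)) = 0) := by
  refine ⟨?_, ?_, ?_⟩
  · intro h
    simp [gaugeA', LinearMap.mul'_apply, Algebra.algebraMap_eq_smul_one]
  · simp [gaugeA', Statement6Aux.antipode_one, Algebra.TensorProduct.one_def, LinearMap.mul'_apply]
  · intro h
    rw [gaugeA'_eq, map_sub_sub]
    simp only [LinearMap.sub_apply, map_sub, map_add, LinearMap.add_apply]
    rw [wedge_LL, map_L_eta, map_eta_L, map_eta_eta, wedge_tmul_one_one,
      wedge_one_one_tmul]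
    have hη : (η : H →ₗ[k] H ⊗[k] H) h = Coalgebra.counit (R := k) h • ((1:H) ⊗ₜ[k] 1) := rfl
    rw [hη, map_smul, map_smul, dOne_one_one, wedge_one_one_tmul]
    simp only [dOne, LinearMap.add_apply, LinearMap.sub_apply, TensorProduct.mk_apply]
    abel
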